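/- Theorem 1, item (i) (dwell-time supervisor, uniform output bound). Consider supervisor data (M, (Δ_q), (β_q), (χ_q)) and a supervised output trajectory (y, v, (t_j), (q_j)) with disturbance bound v. Define β̄(s) := max_{0 ≤ q ≤ M} β_q(s, 0). Then for every t ≥ 0: y(t) ≤ β̄(max{2Δ_M, y(0)}) + v(t) + β_M(2·v(t), 0). -/
import Mathlib


open Set Filter

/-- A class-`K` function: continuous, strictly increasing on `[0,∞)`, vanishing at `0`. -/
def ClassK (γ : ℝ → ℝ) : Prop :=
  ContinuousOn γ (Ici 0) ∧ StrictMonoOn γ (Ici 0) ∧ γ 0 = 0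

/-- A class-`KL` function: class `K` in the first argument for every fixed second argument
`t ≥ 0`, and (for every fixed `s > 0`) continuous, strictly decreasing and tending to `0`
at `+∞` in the second argument. -/
def ClassKL (β : ℝ → ℝ → ℝ) : Prop :=
  (∀ t ≥ (0:ℝ), ClassK (fun s => β s t)) ∧
  ∀ s > (0:ℝ), ContinuousOn (β s) (Ici 0) ∧ StrictAntiOn (β s) (Ici 0) ∧
    Tendsto (β s) atTop (nhds 0)

/-- Supervisor data: number of thresholds `M ≥ 1`, thresholds
`0 = Δ 0 < Δ 1 < ⋯ < Δ M`, class-`KL` bounds `β q` with `β q s 0 > s` for `s > 0` and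
`β q (Δ (q+1)) 0 ≤ Δ (q+2)` whenever `q+2 ≤ M`, and inverses `χ q` of `s ↦ β q s 0`. -/
structure SupervisorData where
  M : ℕ
  Δ : ℕ → ℝ
  β : ℕ → ℝ → ℝ → ℝ
  χ : ℕ → ℝ → ℝ
  hM : 1 ≤ M
  hΔ0 : Δ 0 = 0
  hΔlt : ∀ q < M, Δ q < Δ (q + 1)
  hβKL : ∀ q ≤ M, ClassKL (β q)
  hβgt : ∀ q ≤ M, ∀ s > (0:ℝ), s < β q s 0
  hβΔ : ∀ q, q + 2 ≤ M → β q (Δ (q + 1)) 0 ≤ Δ (q + 2)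
  hχ : ∀ q ≤ M, ∀ s ≥ (0:ℝ), 0 ≤ χ q s ∧ β q (χ q s) 0 = s

/-- A supervised output trajectory (dwell-time supervisor) with disturbance bound `v`:
a continuous nonnegative output `y` on `[0,∞)`, a nondecreasing nonnegative disturbance
bound `v`, switching times `t 0 = 0 < t 1 < ⋯` (finite with last index `N` when `N ≠ ⊤`,
in which case `t` is only constrained up to `N` and the last interval is `[t N, ∞)`;
infinite with `t j → ∞` when `N = ⊤`), and modes `q j ≤ M` with `q (j+1) ≠ q j`,
satisfying the initial, switching and inter-switch SIIOS output conditions. -/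
structure SupTraj (D : SupervisorData) where
  y : ℝ → ℝ
  v : ℝ → ℝ
  t : ℕ → ℝ
  q : ℕ → ℕ
  N : ℕ∞
  hy_cont : ContinuousOn y (Ici 0)
  hy_nonneg : ∀ s ≥ (0:ℝ), 0 ≤ y s
  hv_mono : MonotoneOn v (Ici 0)
  hv_nonneg : ∀ s ≥ (0:ℝ), 0 ≤ v s
  ht0 : t 0 = 0
  ht_lt : ∀ j : ℕ, ((j + 1 : ℕ) : ℕ∞) ≤ N → t j < t (j + 1)
  ht_top : N = ⊤ → Tendsto t atTop atTop
  hq_le : ∀ j : ℕ, (j : ℕ∞) ≤ N → q j ≤ D.M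
  hq_ne : ∀ j : ℕ, ((j + 1 : ℕ) : ℕ∞) ≤ N → q (j + 1) ≠ q j
  h_init_lo : D.Δ (q 0) ≤ y 0
  h_init_hi : q 0 < D.M → y 0 < D.Δ (q 0 + 1)
  h_switch_lt : ∀ j : ℕ, 1 ≤ j → (j : ℕ∞) ≤ N → q j < D.M →
    D.Δ (q j) ≤ y (t j) ∧ y (t j) ≤ D.χ (q j) (D.Δ (q j + 1))
  h_switch_top : ∀ j : ℕ, 1 ≤ j → (j : ℕ∞) ≤ N → q j = D.M →
    D.Δ D.M ≤ y (t j) ∧ y (t j) ≤ D.Δ D.M + v (t j)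
  h_bound : ∀ j : ℕ, (j : ℕ∞) ≤ N → ∀ s : ℝ, t j ≤ s →
    (((j + 1 : ℕ) : ℕ∞) ≤ N → s ≤ t (j + 1)) →
    y s ≤ D.β (q j) (y (t j)) (s - t j) + v s

/-- **Theorem 1(i)** (dwell-time supervisor, uniform output bound):
for every `t ≥ 0`, `y t ≤ β̄ (max (2 Δ_M) (y 0)) + v t + β_M (2 v t) 0`,
where `β̄ s = max_{0 ≤ q ≤ M} β q s 0`. -/
theorem thm1_i (D : SupervisorData) (Tr : SupTraj D) :
    ∀ s ≥ (0:ℝ),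
      Tr.y s ≤
        (Finset.range (D.M + 1)).sup'
            (Finset.nonempty_range_iff.mpr (Nat.succ_ne_zero _))
            (fun q => D.β q (max (2 * D.Δ D.M) (Tr.y 0)) 0)
          + Tr.v s + D.β D.M (2 * Tr.v s) 0 := by

  classical
  intro s hs
  set C := max (2 * D.Δ D.M) (Tr.y 0) with hCdef
  set B := (Finset.range (D.M + 1)).sup'
      (Finset.nonempty_range_iff.mpr (Nat.succ_ne_zero _))
      (fun q => D.β q C 0) with hBdef
  -- monotonicity of Δ on [0, M]
  have hΔmono : ∀ p q : ℕ, p ≤ q → q ≤ D.M → D.Δ p ≤ D.Δ q := by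
    intro p q hpq hqM
    induction q with
    | zero =>
      have hp : p = 0 := Nat.le_zero.mp hpq
      simp [hp]
    | succ n ih =>
      by_cases hp : p = n + 1
      · simp [hp]
      · have hpn : p ≤ n := by omega
        exact (ih hpn (by omega)).trans (D.hΔlt n (by omega)).le
  have hΔnonneg : ∀ q, q ≤ D.M → 0 ≤ D.Δ q := by
    intro q hq
    have := hΔmono 0 q (Nat.zero_le q) hq
    rwa [D.hΔ0] at this
  have hΔMpos : 0 < D.Δ D.M := by
    have h1 : D.Δ 0 < D.Δ 1 := D.hΔlt 0 D.hM
    have h2 : D.Δ 1 ≤ D.Δ D.M := hΔmono 1 D.M D.hM le_rfl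
    rw [D.hΔ0] at h1
    linarith
  have hC_pos : 0 < C := lt_of_lt_of_le (by linarith) (le_max_left _ _)
  have hle_B : ∀ q, q ≤ D.M → D.β q C 0 ≤ B := by
    intro q hq
    exact Finset.le_sup' (fun q => D.β q C 0) (Finset.mem_range.mpr (by omega))
  -- facts about the β's
  have hβK : ∀ q, q ≤ D.M → ClassK (fun s => D.β q s 0) :=
    fun q hq => (D.hβKL q hq).1 0 le_rfl
  have hβmono : ∀ q, q ≤ D.M → ∀ a b : ℝ, 0 ≤ a → a ≤ b → D.β q a 0 ≤ D.β q b 0 := by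
    intro q hq a b ha hab
    exact (hβK q hq).2.1.monotoneOn (mem_Ici.mpr ha) (mem_Ici.mpr (ha.trans hab)) hab
  have hβ0 : ∀ q, q ≤ D.M → D.β q 0 0 = 0 := fun q hq => (hβK q hq).2.2
  have hβnonneg : ∀ q, q ≤ D.M → ∀ a : ℝ, 0 ≤ a → 0 ≤ D.β q a 0 := by
    intro q hq a ha
    have h := hβmono q hq 0 a le_rfl ha
    rwa [hβ0 q hq] at h
  have hβtime : ∀ q, q ≤ D.M → ∀ a : ℝ, 0 ≤ a → ∀ τ : ℝ, 0 ≤ τ →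
      D.β q a τ ≤ D.β q a 0 := by
    intro q hq a ha τ hτ
    rcases eq_or_lt_of_le ha with h | h
    · have h1 : D.β q 0 τ = 0 := ((D.hβKL q hq).1 τ hτ).2.2
      have h2 : D.β q 0 0 = 0 := hβ0 q hq
      rw [← h, h1, h2]
    · exact ((D.hβKL q hq).2 a h).2.1.antitoneOn (mem_Ici.mpr le_rfl) (mem_Ici.mpr hτ) hτ
  have hBC : C ≤ B := (D.hβgt D.M le_rfl C hC_pos).le.trans (hle_B D.M le_rfl)
  have hB0 : 0 ≤ B := hC_pos.le.trans hBC
  have hvs : 0 ≤ Tr.v s := Tr.hv_nonneg s hs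
  have hβM2vs : 0 ≤ D.β D.M (2 * Tr.v s) 0 := hβnonneg D.M le_rfl _ (by linarith)
  -- switching times are nonnegative
  have ht_nonneg : ∀ j : ℕ, ((j : ℕ∞) ≤ Tr.N) → 0 ≤ Tr.t j := by
    intro j
    induction j with
    | zero => intro _; rw [Tr.ht0]
    | succ m ih =>
      intro hm
      have hmN : ((m : ℕ∞) ≤ Tr.N) :=
        le_trans (by exact_mod_cast Nat.le_succ m) hm
      exact (ih hmN).trans (Tr.ht_lt m hm).le
  -- key estimate at a switching time
  have hkey : ∀ j : ℕ, ((j : ℕ∞) ≤ Tr.N) → Tr.t j ≤ s →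
      D.β (Tr.q j) (Tr.y (Tr.t j)) 0 ≤ B + D.β D.M (2 * Tr.v s) 0 := by
    intro j hjN htj
    have hqj : Tr.q j ≤ D.M := Tr.hq_le j hjN
    have hytj : 0 ≤ Tr.y (Tr.t j) := Tr.hy_nonneg _ (ht_nonneg j hjN)
    rcases Nat.eq_zero_or_pos j with hj0 | hj1
    · subst hj0
      rw [Tr.ht0] at hytj ⊢
      have hy0C : Tr.y 0 ≤ C := le_max_right _ _
      have h := (hβmono _ hqj _ _ hytj hy0C).trans (hle_B _ hqj)
      linarith
    · rcases Nat.lt_or_ge (Tr.q j) D.M with hlt | hge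
      · obtain ⟨h1, h2⟩ := Tr.h_switch_lt j hj1 hjN hlt
        have hΔnext : 0 ≤ D.Δ (Tr.q j + 1) := hΔnonneg _ (by omega)
        obtain ⟨hχ0, hχeq⟩ := D.hχ (Tr.q j) hqj _ hΔnext
        have step1 : D.β (Tr.q j) (Tr.y (Tr.t j)) 0 ≤ D.Δ (Tr.q j + 1) := by
          calc D.β (Tr.q j) (Tr.y (Tr.t j)) 0
              ≤ D.β (Tr.q j) (D.χ (Tr.q j) (D.Δ (Tr.q j + 1))) 0 :=
                hβmono _ hqj _ _ hytj h2
            _ = D.Δ (Tr.q j + 1) := hχeq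
        have step2 : D.Δ (Tr.q j + 1) ≤ D.Δ D.M := hΔmono _ _ (by omega) le_rfl
        have step3 : 2 * D.Δ D.M ≤ C := le_max_left _ _
        linarith
      · have hqM : Tr.q j = D.M := le_antisymm hqj hge
        obtain ⟨h1, h2⟩ := Tr.h_switch_top j hj1 hjN hqM
        have hvtj0 : 0 ≤ Tr.v (Tr.t j) := Tr.hv_nonneg _ (ht_nonneg j hjN)
        have hvle : Tr.v (Tr.t j) ≤ Tr.v s :=
          Tr.hv_mono (mem_Ici.mpr (ht_nonneg j hjN)) (mem_Ici.mpr hs) htj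
        rw [hqM]
        rcases le_total (Tr.v (Tr.t j)) (D.Δ D.M) with hcase | hcase
        · have hy2 : Tr.y (Tr.t j) ≤ 2 * D.Δ D.M := by linarith
          have hb : D.β D.M (Tr.y (Tr.t j)) 0 ≤ D.β D.M C 0 :=
            hβmono _ le_rfl _ _ hytj (hy2.trans (le_max_left _ _))
          have := hb.trans (hle_B _ le_rfl)
          linarith
        · have hy2 : Tr.y (Tr.t j) ≤ 2 * Tr.v (Tr.t j) := by linarith
          have hb : D.β D.M (Tr.y (Tr.t j)) 0 ≤ D.β D.M (2 * Tr.v s) 0 :=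
            hβmono _ le_rfl _ _ hytj (by linarith)
          linarith
  -- main estimate given a suitable interval
  have hmain : ∀ j : ℕ, ((j : ℕ∞) ≤ Tr.N) → Tr.t j ≤ s →
      ((((j + 1 : ℕ) : ℕ∞) ≤ Tr.N) → s ≤ Tr.t (j + 1)) →
      Tr.y s ≤ B + Tr.v s + D.β D.M (2 * Tr.v s) 0 := by
    intro j hjN htj hnext
    have hb := Tr.h_bound j hjN s htj hnext
    have ht : D.β (Tr.q j) (Tr.y (Tr.t j)) (s - Tr.t j) ≤ D.β (Tr.q j) (Tr.y (Tr.t j)) 0 :=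
      hβtime _ (Tr.hq_le j hjN) _ (Tr.hy_nonneg _ (ht_nonneg j hjN)) _ (by linarith)
    have hk := hkey j hjN htj
    linarith
  -- find the interval containing s
  rcases eq_or_ne Tr.N ⊤ with hN | hN
  · obtain ⟨b, hb⟩ := eventually_atTop.mp ((Tr.ht_top hN).eventually_gt_atTop s)
    set P := fun k => Tr.t k ≤ s with hP
    have hP0 : P 0 := by rw [hP]; simpa [Tr.ht0] using hs
    have hPj : P (Nat.findGreatest P b) := Nat.findGreatest_spec (Nat.zero_le b) hP0
    apply hmain (Nat.findGreatest P b) (by simp [hN]) hPj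
    intro _
    by_contra hcon
    push_neg at hcon
    rcases Nat.lt_or_ge b (Nat.findGreatest P b + 1) with h | h
    · exact absurd (hb _ (by omega)) (not_lt.mpr hcon.le)
    · exact Nat.findGreatest_is_greatest (Nat.lt_succ_self _) h hcon.le
  · obtain ⟨n, hn0⟩ := WithTop.ne_top_iff_exists.mp hN
    have hn : ((n : ℕ) : ℕ∞) = Tr.N := by exact_mod_cast hn0
    set P := fun k => k ≤ n ∧ Tr.t k ≤ s with hP
    have hP0 : P 0 := ⟨Nat.zero_le n, by rw [Tr.ht0]; exact hs⟩
    have hPj : P (Nat.findGreatest P n) := Nat.findGreatest_spec (Nat.zero_le n) hP0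
    have hjN : ((Nat.findGreatest P n : ℕ∞) ≤ Tr.N) := by
      rw [← hn]; exact_mod_cast hPj.1
    apply hmain (Nat.findGreatest P n) hjN hPj.2
    intro hj1
    have hj1n : Nat.findGreatest P n + 1 ≤ n := by
      rw [← hn] at hj1; exact_mod_cast hj1
    by_contra hcon
    push_neg at hcon
    exact Nat.findGreatest_is_greatest (Nat.lt_succ_self _) hj1n ⟨hj1n, hcon.le⟩
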